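/- In the BCK-algebra X'_n (n ≥ 5), for all x, y ∈ X'_n, if x ≤ n in the BCK-order and y ≠ n, then x·y ≤ n·y. -/
import Mathlib


/-- The operation of the linearly ordered BCK-algebra `X_n` written on natural
numbers: `x*y = 0` if `x ≤ y`, `x*0 = x`, `x*y = 1` if `x = y+1`, and
`x*y = x−y−1` if `x > y+1` and `y ≥ 1`. -/
def natStar (x y : ℕ) : ℕ :=
  if x ≤ y then 0 else if y = 0 then x else if x = y + 1 then 1 else x - y - 1

/-- The operation of `X'_n = {0, 1, …, n}` written on natural numbers:
`x·y = x*y` for `x, y ≤ n−1`; `n·0 = n`; `n·y = n−y−1` for `1 ≤ y ≤ n−2`;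
`n·(n−1) = 1`; `x·n = 0` for every `x ≠ n−1` (in particular `n·n = 0`);
and `(n−1)·n = 1`. -/
def primeVal (n x y : ℕ) : ℕ :=
  if y = n then (if x = n - 1 then 1 else 0)
  else if x = n then (if y = 0 then n else if y = n - 1 then 1 else n - y - 1)
  else natStar x y

theorem natStar_le (x y : ℕ) : natStar x y ≤ x := by
  unfold natStar; split_ifs <;> omega

theorem primeVal_lt {n x y : ℕ} (hn : 1 ≤ n) (hx : x < n + 1) (hy : y < n + 1) :
    primeVal n x y < n + 1 := by
  have h := natStar_le x y
  unfold primeVal; split_ifs <;> omega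

/-- The BCK-algebra operation of `X'_n = {0, 1, …, n}` (for `n ≥ 5`),
as an operation on `Fin (n+1)`. -/
def primeOp {n : ℕ} (hn : 5 ≤ n) (x y : Fin (n + 1)) : Fin (n + 1) :=
  ⟨primeVal n x y, primeVal_lt (by omega) x.isLt y.isLt⟩

set_option maxHeartbeats 2000000 in
theorem primeVal_key (n x y : ℕ) (hn : 5 ≤ n) (hx : x < n + 1) (hy : y < n + 1)
    (hxn : x ≠ n - 1) (hy' : y ≠ n) :
    primeVal n (primeVal n x y) (primeVal n n y) = 0 := by
  unfold primeVal natStar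
  simp only [hy', if_false, ite_true, ite_false, if_pos rfl]
  split_ifs <;> omega

/-- In the BCK-algebra `X'_n` (`n ≥ 5`), for all `x, y ∈ X'_n`, if `x ≤ n` in
the BCK-order and `y ≠ n`, then `x·y ≤ n·y`. -/
theorem primeOp_le_top_mono (n : ℕ) (hn : 5 ≤ n) (x y : Fin (n + 1))
    (hx : primeOp hn x ⟨n, by omega⟩ = 0) (hy : y ≠ ⟨n, by omega⟩) :
    primeOp hn (primeOp hn x y) (primeOp hn ⟨n, by omega⟩ y) = 0 := by
  have hx' : primeVal n x.1 n = 0 := congrArg Fin.val hx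
  have hy' : y.1 ≠ n := fun h => hy (Fin.ext h)
  have hxn : x.1 ≠ n - 1 := by
    unfold primeVal at hx'; split_ifs at hx' <;> omega
  exact Fin.ext (primeVal_key n x.1 y.1 hn x.isLt y.isLt hxn hy')
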